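/- Let K be a field and n ≥ 0. Let M be an (n+2) × (n+2) alternating matrix over K (i.e. Mᵀ = −M and all diagonal entries are zero) with M₀₁ = 1, and define the n × n matrix N by N_{ij} = M_{i+2,j+2} − M_{0,i+2}·M_{1,j+2} + M_{0,j+2}·M_{1,i+2} for 0 ≤ i,j ≤ n−1 (indices of M running from 0). Then N is alternating and rank(M) = 2 + rank(N). -/

import Mathlib

open Matrix

section aux

variable {K : Type*} [Field K]

lemma range_prodMap' {V W V' W' : Type*} [AddCommGroup V] [AddCommGroup W]
    [AddCommGroup V'] [AddCommGroup W'] [Module K V] [Module K W] [Module K V'] [Module K W']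
    (f : V →ₗ[K] V') (g : W →ₗ[K] W') :
    LinearMap.range (f.prodMap g) = (LinearMap.range f).prod (LinearMap.range g) := by
  ext ⟨x, y⟩
  simp only [LinearMap.mem_range, Submodule.mem_prod, LinearMap.prodMap_apply, Prod.mk.injEq,
    Prod.exists]
  constructor
  · rintro ⟨a, b, h1, h2⟩; exact ⟨⟨a, h1⟩, ⟨b, h2⟩⟩
  · rintro ⟨⟨a, ha⟩, ⟨b, hb⟩⟩; exact ⟨a, b, ha, hb⟩

lemma finrank_prod_submodule {V W : Type*} [AddCommGroup V] [AddCommGroup W]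
    [Module K V] [Module K W] [FiniteDimensional K V] [FiniteDimensional K W]
    (p : Submodule K V) (q : Submodule K W) :
    Module.finrank K (p.prod q) = Module.finrank K p + Module.finrank K q := by
  have e : (p.prod q) ≃ₗ[K] p × q :=
    { toFun := fun x => (⟨x.1.1, x.2.1⟩, ⟨x.1.2, x.2.2⟩)
      invFun := fun x => ⟨(x.1.1, x.2.1), ⟨x.1.2, x.2.2⟩⟩
      map_add' := fun _ _ => rfl
      map_smul' := fun _ _ => rfl
      left_inv := fun _ => rfl
      right_inv := fun _ => rfl }
  rw [e.finrank_eq, Module.finrank_prod]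

lemma rank_fromBlocks_diag {m n : Type*} [Fintype m] [Fintype n] [DecidableEq m] [DecidableEq n]
    (A : Matrix m m K) (D : Matrix n n K) :
    (fromBlocks A 0 0 D).rank = A.rank + D.rank := by
  set e := LinearEquiv.sumArrowLequivProdArrow m n K K
  have key : (fromBlocks A 0 0 D).mulVecLin
      = (e.symm : (m → K) × (n → K) →ₗ[K] (m ⊕ n → K)) ∘ₗ
        (A.mulVecLin.prodMap D.mulVecLin) ∘ₗ (e : (m ⊕ n → K) →ₗ[K] (m → K) × (n → K)) := by
    apply LinearMap.ext
    intro v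
    funext i
    cases i with
    | inl i =>
      simp [mulVecLin, e, LinearEquiv.sumArrowLequivProdArrow, mulVec, dotProduct,
        Fintype.sum_sum_type, fromBlocks]
    | inr i =>
      simp [mulVecLin, e, LinearEquiv.sumArrowLequivProdArrow, mulVec, dotProduct,
        Fintype.sum_sum_type, fromBlocks]
  rw [Matrix.rank, key, LinearMap.range_comp, LinearEquiv.finrank_map_eq,
    LinearMap.range_comp_of_range_eq_top _ (LinearMap.range_eq_top.mpr e.surjective),
    range_prodMap', finrank_prod_submodule]
  rfl

end aux

/-- Let `K` be a field and `n ≥ 0`.  Let `M` be an `(n+2) × (n+2)`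
alternating matrix (`Mᵀ = −M` with zero diagonal) with `M₀₁ = 1`, and let `N` be the
`n × n` matrix with `N_{ij} = M_{i+2,j+2} − M_{0,i+2}·M_{1,j+2} + M_{0,j+2}·M_{1,i+2}`.
Then `N` is alternating and `rank M = 2 + rank N`. -/
theorem alternating_rank_eq_two_add {K : Type*} [Field K] {n : ℕ}
    (M : Matrix (Fin (n + 2)) (Fin (n + 2)) K)
    (hMalt : Mᵀ = -M) (hMdiag : ∀ i, M i i = 0) (hM01 : M 0 1 = 1)
    (N : Matrix (Fin n) (Fin n) K)
    (hN : ∀ i j, N i j = M i.succ.succ j.succ.succ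
      - M 0 i.succ.succ * M 1 j.succ.succ + M 0 j.succ.succ * M 1 i.succ.succ) :
    (Nᵀ = -N ∧ ∀ i, N i i = 0) ∧ M.rank = 2 + N.rank := by
  have hskew : ∀ i j, M j i = -M i j := fun i j => by
    have := congrFun (congrFun hMalt i) j
    simpa [Matrix.transpose_apply] using this
  constructor
  · constructor
    · ext i j
      simp only [Matrix.transpose_apply, Matrix.neg_apply, hN]
      rw [hskew i.succ.succ j.succ.succ]
      ring
    · intro i
      simp [hN, hMdiag]
  -- rank computation
  · set e : Fin 2 ⊕ Fin n ≃ Fin (n + 2) :=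
      finSumFinEquiv.trans (finCongr (add_comm 2 n)) with he
    have he0 : e (Sum.inl 0) = 0 := by
      apply Fin.ext; simp [he, finSumFinEquiv]
    have he1 : e (Sum.inl 1) = 1 := by
      apply Fin.ext; simp [he, finSumFinEquiv]
    have her : ∀ j : Fin n, e (Sum.inr j) = j.succ.succ := by
      intro j
      apply Fin.ext
      simp [he, finSumFinEquiv, Fin.natAdd]
      omega
    set A : Matrix (Fin 2) (Fin 2) K := !![0, 1; -1, 0] with hA
    set B : Matrix (Fin 2) (Fin n) K := fun i j => M (e (Sum.inl i)) (e (Sum.inr j)) with hB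
    set C : Matrix (Fin n) (Fin 2) K := fun i j => M (e (Sum.inr i)) (e (Sum.inl j)) with hC
    set D : Matrix (Fin n) (Fin n) K := fun i j => M (e (Sum.inr i)) (e (Sum.inr j)) with hD
    have hM10 : M 1 0 = -1 := by rw [hskew 0 1, hM01]
    have hsub : M.submatrix e e = fromBlocks A B C D := by
      ext i j
      cases i with
      | inl i =>
        cases j with
        | inl j =>
          fin_cases i <;> fin_cases j <;>
            simp [he0, he1, hA, hMdiag, hM01, hM10, fromBlocks]
        | inr j => rfl
      | inr i =>
        cases j with
        | inl j => rfl
        | inr j => rfl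
    have hdet : IsUnit A.det := by
      rw [hA, Matrix.det_fin_two_of]; norm_num
    have hinvA : Invertible A := A.invertibleOfIsUnitDet hdet
    have hinv_eq : ⅟A = !![0, -1; 1, 0] := by
      apply invOf_eq_right_inv
      ext i j
      fin_cases i <;> fin_cases j <;>
        simp [hA, Matrix.mul_apply, Fin.sum_univ_two]
    have hSchur : D - C * ⅟A * B = N := by
      ext i j
      rw [hinv_eq]
      simp only [Matrix.sub_apply, Matrix.mul_apply, Fin.sum_univ_two]
      simp only [hB, hC, hD, hN, her]
      rw [he0, he1, hskew 0 i.succ.succ, hskew 1 i.succ.succ]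
      simp [Matrix.of_apply]
      ring
    have hfact := Matrix.fromBlocks_eq_of_invertible₁₁ A B C D
    have hdetL : IsUnit (fromBlocks (1 : Matrix (Fin 2) (Fin 2) K) 0 (C * ⅟A)
        (1 : Matrix (Fin n) (Fin n) K)).det := by
      rw [Matrix.det_fromBlocks_zero₁₂]; simp
    have hdetU : IsUnit (fromBlocks (1 : Matrix (Fin 2) (Fin 2) K) (⅟A * B) 0
        (1 : Matrix (Fin n) (Fin n) K)).det := by
      rw [Matrix.det_fromBlocks_zero₂₁]; simp
    have hrank1 : M.rank = (fromBlocks A B C D).rank := by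
      rw [← hsub, Matrix.rank_submatrix]
    rw [hrank1, hfact, Matrix.rank_mul_eq_left_of_isUnit_det _ _ hdetU,
      Matrix.rank_mul_eq_right_of_isUnit_det _ _ hdetL, hSchur, rank_fromBlocks_diag,
      Matrix.rank_of_isUnit A (isUnit_of_invertible A)]
    simp
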